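/- Let v ∈ W and let J be the set of simple reflections s_β that fix the weight w₀·(v·e_v), with W_J the subgroup of W they generate. Then for every simple root β, the root (w₀v⁻¹w₀)(β) is negative if and only if s_β ∉ J; consequently w₀v⁻¹w₀ is the unique element of minimal length in its coset (w₀v⁻¹w₀)W_J. -/

import Mathlib

open scoped InnerProductSpace Classical

noncomputable section

/-- A reduced crystallographic root system `Φ` spanning a finite-dimensional real inner
product space `V`, together with a choice of simple roots `π` (determining the positive
system), the corresponding fundamental weights `ω`, the reflections `s`, the Weyl group
`W` and the weight lattice `X`. -/
structure RootSystemData (V : Type) [NormedAddCommGroup V] [InnerProductSpace ℝ V]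
    [FiniteDimensional ℝ V] where
  /-- the (finite) set of roots -/
  Φ : Finset V
  /-- the rank -/
  r : ℕ
  /-- the simple roots `α₁, …, α_r` -/
  π : Fin r → V
  /-- the fundamental weights `ω₁, …, ω_r` -/
  ω : Fin r → V
  /-- the orthogonal reflection attached to a root -/
  s : V → (V ≃ₗ[ℝ] V)
  /-- the Weyl group -/
  W : Subgroup (V ≃ₗ[ℝ] V)
  /-- the weight lattice -/
  X : AddSubgroup V
  root_ne_zero : ∀ α ∈ Φ, α ≠ (0 : V)
  root_span : Submodule.span ℝ (Φ : Set V) = ⊤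
  reduced : ∀ α ∈ Φ, ∀ c : ℝ, c • α ∈ Φ → c = 1 ∨ c = -1
  crystallographic : ∀ α ∈ Φ, ∀ β ∈ Φ, ∃ n : ℤ, 2 * ⟪β, α⟫_ℝ / ⟪α, α⟫_ℝ = (n : ℝ)
  s_apply : ∀ α ∈ Φ, ∀ v : V, s α v = v - (2 * ⟪v, α⟫_ℝ / ⟪α, α⟫_ℝ) • α
  refl_stable : ∀ α ∈ Φ, ∀ β ∈ Φ, s α β ∈ Φ
  W_eq : W = Subgroup.closure {g : V ≃ₗ[ℝ] V | ∃ α ∈ Φ, g = s α}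
  inner_invariant : ∀ g ∈ W, ∀ u v : V, ⟪g u, g v⟫_ℝ = ⟪u, v⟫_ℝ
  simple_mem : ∀ i, π i ∈ Φ
  simple_indep : LinearIndependent ℝ π
  pos_or_neg : ∀ α ∈ Φ,
      (∃ c : Fin r → ℝ, (∀ i, 0 ≤ c i) ∧ α = ∑ i, c i • π i) ∨
      (∃ c : Fin r → ℝ, (∀ i, 0 ≤ c i) ∧ -α = ∑ i, c i • π i)
  fund : ∀ i j, 2 * ⟪ω i, π j⟫_ℝ / ⟪π j, π j⟫_ℝ = if i = j then (1 : ℝ) else 0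
  X_eq : X = AddSubgroup.closure (Set.range ω)
  X_stable : ∀ g ∈ W, ∀ x ∈ X, g x ∈ X

/-- The pairing `(v, α∨) = 2(v,α)/(α,α)` of a vector with the coroot of `α`. -/
def pairing {V : Type} [NormedAddCommGroup V] [InnerProductSpace ℝ V]
    (v α : V) : ℝ := 2 * ⟪v, α⟫_ℝ / ⟪α, α⟫_ℝ

namespace RootSystemData

variable {V : Type} [NormedAddCommGroup V] [InnerProductSpace ℝ V] [FiniteDimensional ℝ V]
variable (C : RootSystemData V)

/-- `α` is a nonnegative combination of the simple roots (a positive root, if `α ∈ Φ`). -/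
def IsPos (α : V) : Prop := ∃ c : Fin C.r → ℝ, (∀ i, 0 ≤ c i) ∧ α = ∑ i, c i • C.π i

/-- `α` is a nonpositive combination of the simple roots (a negative root, if `α ∈ Φ`). -/
def IsNeg (α : V) : Prop := C.IsPos (-α)

/-- A weight is dominant if it pairs nonnegatively with all simple coroots. -/
def IsDominant (lam : V) : Prop := ∀ i, 0 ≤ pairing lam (C.π i)

/-- The product of the simple reflections along a word. -/
def wordProd (l : List (Fin C.r)) : V ≃ₗ[ℝ] V := (l.map fun i => C.s (C.π i)).prod

/-- The length of `w`: the least length of an expression of `w` as a product of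
simple reflections. -/
def length (w : V ≃ₗ[ℝ] V) : ℕ :=
  sInf {n | ∃ l : List (Fin C.r), l.length = n ∧ C.wordProd l = w}

/-- The (strong) Bruhat order on the Weyl group: `u ≤ v` iff `v` is obtained from `u`
by successively multiplying by reflections, increasing the length at each step. -/
def BruhatLE (u v : V ≃ₗ[ℝ] V) : Prop :=
  Relation.ReflTransGen
    (fun a b => (∃ α ∈ C.Φ, b = a * C.s α) ∧ C.length a < C.length b) u v

/-- The Steinberg weight `e_v = v⁻¹ ⬝ ∑_{i : v⁻¹ α_i < 0} ω_i`. -/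
def steinberg (v : V ≃ₗ[ℝ] V) : V :=
  v⁻¹ (∑ i ∈ Finset.univ.filter (fun i => C.IsNeg (v⁻¹ (C.π i))), C.ω i)

/-- The excellent order on weights: `λ ≤ₑ μ` iff `(λ,λ) < (μ,μ)`, or `λ = wν`, `μ = zν`
for some dominant `ν ∈ X` and `w ≤ z` in the Bruhat order. -/
def ExcLE (lam mu : V) : Prop :=
  ⟪lam, lam⟫_ℝ < ⟪mu, mu⟫_ℝ ∨
    ∃ nu ∈ C.X, C.IsDominant nu ∧
      ∃ w ∈ C.W, ∃ z ∈ C.W, C.BruhatLE w z ∧ lam = w nu ∧ mu = z nu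

/-- The strict excellent order. -/
def ExcLT (lam mu : V) : Prop := C.ExcLE lam mu ∧ lam ≠ mu

/-- The antipodal excellent order: `λ ≤ₐ μ` iff `-λ ≤ₑ -μ`. -/
def AntiLE (lam mu : V) : Prop := C.ExcLE (-lam) (-mu)

/-- The strict antipodal excellent order. -/
def AntiLT (lam mu : V) : Prop := C.AntiLE lam mu ∧ lam ≠ mu

/-- The dominance order: `μ ≤_d ν` iff `ν - μ` is a nonnegative integer combination of
the positive roots. -/
def DomLE (mu nu : V) : Prop :=
  ∃ c : V → ℕ, nu - mu = ∑ α ∈ C.Φ.filter (fun a => C.IsPos a), (c α : ℝ) • α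

theorem omega_mem (i : Fin C.r) : C.ω i ∈ C.X := by
  rw [C.X_eq]; exact AddSubgroup.subset_closure ⟨i, rfl⟩

theorem steinberg_mem {v : V ≃ₗ[ℝ] V} (hv : v ∈ C.W) : C.steinberg v ∈ C.X :=
  C.X_stable _ (inv_mem hv) _ (AddSubgroup.sum_mem _ fun i _ => C.omega_mem i)

/-- The group ring `ℤ[X]` of the weight lattice. -/
abbrev GroupRing := AddMonoidAlgebra ℤ ↥C.X

/-- The basis element `e^λ` of `ℤ[X]`. -/
def expo (x : V) (hx : x ∈ C.X) : C.GroupRing := AddMonoidAlgebra.single ⟨x, hx⟩ 1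

/-- `e^λ`, defined for all `λ : V` (and zero off the lattice). -/
def expoOf (x : V) : C.GroupRing := if hx : x ∈ C.X then C.expo x hx else 0

/-- The coefficient of `e^x` in an element of `ℤ[X]`. -/
def coeff (m : C.GroupRing) (x : ↥C.X) : ℤ := m.coeff x

/-- The support of an element of `ℤ[X]`. -/
def supp (m : C.GroupRing) : Finset ↥C.X := m.coeff.support

/-- The action of `g ∈ W` on the weight lattice. -/
def actX (g : V ≃ₗ[ℝ] V) (hg : g ∈ C.W) : ↥C.X → ↥C.X :=
  fun x => ⟨g x, C.X_stable g hg x.1 x.2⟩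

/-- The action of `g ∈ W` on `ℤ[X]`, with `e^λ ↦ e^{gλ}`. -/
def wAct (g : V ≃ₗ[ℝ] V) (hg : g ∈ C.W) (m : C.GroupRing) : C.GroupRing :=
  AddMonoidAlgebra.ofCoeff (Finsupp.mapDomain (C.actX g hg) m.coeff)

/-- `m` lies in the invariant subring `ℤ[X]^W`. -/
def IsWInvariant (m : C.GroupRing) : Prop := ∀ g (hg : g ∈ C.W), C.wAct g hg m = m

/-- The parabolic subgroup `W_{Π'}` generated by the simple reflections `s_α, α ∈ Π'`,
for a subset `Π'` of the simple roots (given by a subset `J` of the index set). -/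
def parabolicSubgroup (J : Set (Fin C.r)) : Subgroup (V ≃ₗ[ℝ] V) :=
  Subgroup.closure {g | ∃ i ∈ J, g = C.s (C.π i)}

theorem parabolic_le (J : Set (Fin C.r)) : C.parabolicSubgroup J ≤ C.W := by
  refine (Subgroup.closure_le _).2 ?_
  rintro g ⟨i, _, rfl⟩
  rw [C.W_eq]
  exact Subgroup.subset_closure ⟨C.π i, C.simple_mem i, rfl⟩

/-- `m` lies in the invariant subring `ℤ[X]^H` for a subgroup `H ≤ W`. -/
def IsInvariantUnder (H : Subgroup (V ≃ₗ[ℝ] V)) (hH : H ≤ C.W) (m : C.GroupRing) : Prop :=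
  ∀ g (hg : g ∈ H), C.wAct g (hH hg) m = m

/-- `v` is of minimal length in its coset `v ⬝ W_{Π'}`. -/
def IsMinCosetRep (J : Set (Fin C.r)) (v : V ≃ₗ[ℝ] V) : Prop :=
  v ∈ C.W ∧ ∀ z ∈ C.parabolicSubgroup J, C.length v ≤ C.length (v * z)

/-- The subgroup generated by the simple reflections fixing a given vector. -/
def fixSubgroup (x : V) : Subgroup (V ≃ₗ[ℝ] V) :=
  Subgroup.closure {g | ∃ i : Fin C.r, C.s (C.π i) x = x ∧ g = C.s (C.π i)}

end RootSystemData

namespace RootSystemData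

variable {V : Type} [NormedAddCommGroup V] [InnerProductSpace ℝ V] [FiniteDimensional ℝ V]
variable (C : RootSystemData V)

theorem root_inner_pos {α : V} (hα : α ∈ C.Φ) : 0 < ⟪α, α⟫_ℝ :=
  lt_of_le_of_ne real_inner_self_nonneg
    (Ne.symm (inner_self_ne_zero.2 (C.root_ne_zero α hα)))

theorem simple_span : Submodule.span ℝ (Set.range C.π) = ⊤ := by
  rw [eq_top_iff, ← C.root_span, Submodule.span_le]
  intro α hα
  rcases C.pos_or_neg α hα with ⟨c, _, h⟩ | ⟨c, _, h⟩
  · rw [h]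
    exact Submodule.sum_mem _ fun i _ =>
      Submodule.smul_mem _ _ (Submodule.subset_span ⟨i, rfl⟩)
  · have : α = ∑ i, (-(c i)) • C.π i := by
      have := congrArg Neg.neg h
      simpa [neg_neg, Finset.sum_neg_distrib, neg_smul] using this
    rw [this]
    exact Submodule.sum_mem _ fun i _ =>
      Submodule.smul_mem _ _ (Submodule.subset_span ⟨i, rfl⟩)

/-- The simple roots form a basis. -/
def basis : Module.Basis (Fin C.r) ℝ V :=
  Module.Basis.mk C.simple_indep (by rw [C.simple_span])

theorem basis_apply (i : Fin C.r) : C.basis i = C.π i := Module.Basis.mk_apply _ _ _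

/-- Coordinates with respect to the simple roots. -/
def coord (x : V) (i : Fin C.r) : ℝ := C.basis.repr x i

theorem sum_coord (x : V) : ∑ i, C.coord x i • C.π i = x := by
  have := C.basis.sum_repr x
  simpa [coord, basis_apply] using this

theorem coord_sum (c : Fin C.r → ℝ) (j : Fin C.r) :
    C.coord (∑ i, c i • C.π i) j = c j := by
  have : (∑ i, c i • C.π i) = ∑ i, c i • C.basis i := by simp [basis_apply]
  rw [coord, this]
  rw [C.basis.repr_sum_self]

/-! ### Positivity API -/

theorem isPos_iff {x : V} : C.IsPos x ↔ ∀ i, 0 ≤ C.coord x i := by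
  constructor
  · rintro ⟨c, hc, rfl⟩ i
    rw [C.coord_sum]; exact hc i
  · intro h
    exact ⟨fun i => C.coord x i, h, (C.sum_coord x).symm⟩

theorem isNeg_iff {x : V} : C.IsNeg x ↔ ∀ i, C.coord x i ≤ 0 := by
  unfold IsNeg
  rw [C.isPos_iff]
  have h : ∀ i, C.coord (-x) i = -C.coord x i := by
    intro i; simp [coord]
  constructor
  · intro hh i; have := hh i; rw [h i] at this; linarith
  · intro hh i; rw [h i]; have := hh i; linarith

theorem isNeg_neg_iff {x : V} : C.IsNeg (-x) ↔ C.IsPos x := by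
  unfold IsNeg; rw [neg_neg]

theorem isPos_or_isNeg {α : V} (hα : α ∈ C.Φ) : C.IsPos α ∨ C.IsNeg α :=
  C.pos_or_neg α hα

theorem not_isPos_isNeg {α : V} (hα : α ∈ C.Φ) (h1 : C.IsPos α) (h2 : C.IsNeg α) :
    False := by
  rw [C.isPos_iff] at h1
  rw [C.isNeg_iff] at h2
  apply C.root_ne_zero α hα
  rw [← C.sum_coord α]
  have : ∀ i, C.coord α i = 0 := fun i => le_antisymm (h2 i) (h1 i)
  simp [this]

theorem isPos_of_not_isNeg {α : V} (hα : α ∈ C.Φ) (h : ¬ C.IsNeg α) : C.IsPos α :=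
  (C.isPos_or_isNeg hα).resolve_right h

theorem isNeg_of_not_isPos {α : V} (hα : α ∈ C.Φ) (h : ¬ C.IsPos α) : C.IsNeg α :=
  (C.isPos_or_isNeg hα).resolve_left h

theorem isPos_add {x y : V} (hx : C.IsPos x) (hy : C.IsPos y) : C.IsPos (x + y) := by
  rw [C.isPos_iff] at *
  intro i
  have : C.coord (x + y) i = C.coord x i + C.coord y i := by simp [coord]
  rw [this]; exact add_nonneg (hx i) (hy i)

theorem isPos_smul {c : ℝ} {x : V} (hc : 0 ≤ c) (hx : C.IsPos x) : C.IsPos (c • x) := by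
  rw [C.isPos_iff] at *
  intro i
  have : C.coord (c • x) i = c * C.coord x i := by simp [coord]
  rw [this]; exact mul_nonneg hc (hx i)

theorem isPos_zero : C.IsPos (0 : V) := by
  rw [C.isPos_iff]; intro i; simp [coord]

theorem isPos_sum {ι : Type*} (t : Finset ι) (c : ι → ℝ) (f : ι → V)
    (hc : ∀ k, 0 ≤ c k) (hf : ∀ k, c k ≠ 0 → C.IsPos (f k)) :
    C.IsPos (∑ k ∈ t, c k • f k) := by
  classical
  refine Finset.sum_induction _ _ (fun a b => C.isPos_add) C.isPos_zero ?_
  intro k _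
  by_cases h : c k = 0
  · simp [h, C.isPos_zero]
  · exact C.isPos_smul (hc k) (hf k h)

/-! ### Reflection API -/

theorem s_apply_root {α : V} (hα : α ∈ C.Φ) (x : V) :
    C.s α x = x - (2 * ⟪x, α⟫_ℝ / ⟪α, α⟫_ℝ) • α := C.s_apply α hα x

theorem s_apply_self {α : V} (hα : α ∈ C.Φ) : C.s α α = -α := by
  rw [C.s_apply_root hα]
  have h0 : ⟪α, α⟫_ℝ ≠ 0 := ne_of_gt (C.root_inner_pos hα)
  rw [mul_div_assoc, div_self h0]
  module

theorem s_s {α : V} (hα : α ∈ C.Φ) (x : V) : C.s α (C.s α x) = x := by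
  have h0 : ⟪α, α⟫_ℝ ≠ 0 := ne_of_gt (C.root_inner_pos hα)
  rw [C.s_apply_root hα, C.s_apply_root hα, inner_sub_left, real_inner_smul_left]
  have : ⟪x, α⟫_ℝ - 2 * ⟪x, α⟫_ℝ / ⟪α, α⟫_ℝ * ⟪α, α⟫_ℝ = -⟪x, α⟫_ℝ := by
    field_simp; ring
  rw [this]
  have : 2 * -⟪x, α⟫_ℝ / ⟪α, α⟫_ℝ = -(2 * ⟪x, α⟫_ℝ / ⟪α, α⟫_ℝ) := by ring
  rw [this]
  module

theorem s_sq {α : V} (hα : α ∈ C.Φ) : C.s α * C.s α = 1 :=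
  LinearEquiv.ext fun x => C.s_s hα x

theorem s_inv {α : V} (hα : α ∈ C.Φ) : (C.s α)⁻¹ = C.s α :=
  inv_eq_of_mul_eq_one_left (C.s_sq hα)

theorem neg_mem_Φ {α : V} (hα : α ∈ C.Φ) : -α ∈ C.Φ := by
  have := C.refl_stable α hα α hα
  rwa [C.s_apply_self hα] at this

theorem s_mem_W {α : V} (hα : α ∈ C.Φ) : C.s α ∈ C.W := by
  rw [C.W_eq]; exact Subgroup.subset_closure ⟨α, hα, rfl⟩

theorem s_fix_iff {α : V} (hα : α ∈ C.Φ) (x : V) :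
    C.s α x = x ↔ ⟪x, α⟫_ℝ = 0 := by
  rw [C.s_apply_root hα]
  have h0 : ⟪α, α⟫_ℝ ≠ 0 := ne_of_gt (C.root_inner_pos hα)
  constructor
  · intro h
    have h2 : (2 * ⟪x, α⟫_ℝ / ⟪α, α⟫_ℝ) • α = 0 := by
      have h5 := congrArg (fun z => x - z) h.symm
      simpa using (sub_eq_self.1 h)
    rcases smul_eq_zero.1 h2 with h3 | h3
    · rcases div_eq_zero_iff.1 h3 with h4 | h4
      · linarith
      · exact absurd h4 h0
    · exact absurd h3 (C.root_ne_zero α hα)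
  · intro h; rw [h]; simp

theorem W_root_stable : ∀ g ∈ C.W, ∀ α ∈ C.Φ, g α ∈ C.Φ := by
  intro g hg
  rw [C.W_eq] at hg
  have key : (∀ α ∈ C.Φ, g α ∈ C.Φ) ∧ (∀ α ∈ C.Φ, g⁻¹ α ∈ C.Φ) := by
    induction hg using Subgroup.closure_induction with
    | mem x hx =>
      obtain ⟨α, hα, rfl⟩ := hx
      rw [C.s_inv hα]
      exact ⟨fun β hβ => C.refl_stable α hα β hβ, fun β hβ => C.refl_stable α hα β hβ⟩
    | one => simp
    | mul x y hx hy ihx ihy =>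
      constructor
      · intro α hα
        have : (x * y) α = x (y α) := rfl
        rw [this]; exact ihx.1 _ (ihy.1 _ hα)
      · intro α hα
        have : (x * y)⁻¹ α = y⁻¹ (x⁻¹ α) := rfl
        rw [this]; exact ihy.2 _ (ihx.2 _ hα)
    | inv x hx ihx =>
      refine ⟨ihx.2, ?_⟩
      simpa using ihx.1
  exact key.1

theorem conj_s {g : V ≃ₗ[ℝ] V} (hg : g ∈ C.W) {β : V} (hβ : β ∈ C.Φ) :
    g * C.s β * g⁻¹ = C.s (g β) := by
  have hgβ : g β ∈ C.Φ := C.W_root_stable g hg β hβ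
  refine LinearEquiv.ext fun x => ?_
  have h1 : (g * C.s β * g⁻¹) x = g (C.s β (g⁻¹ x)) := rfl
  rw [h1, C.s_apply_root hβ, C.s_apply_root hgβ]
  have h2 : ⟪g⁻¹ x, β⟫_ℝ = ⟪x, g β⟫_ℝ := by
    have := C.inner_invariant g hg (g⁻¹ x) β
    rw [show g (g⁻¹ x) = x from g.apply_symm_apply x] at this
    linarith
  have h3 : ⟪β, β⟫_ℝ = ⟪g β, g β⟫_ℝ := (C.inner_invariant g hg β β).symm
  rw [map_sub, map_smul, show g (g⁻¹ x) = x from g.apply_symm_apply x, h2, h3]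

/-! ### Words -/

theorem wordProd_nil : C.wordProd [] = 1 := rfl

theorem wordProd_cons (i : Fin C.r) (l : List (Fin C.r)) :
    C.wordProd (i :: l) = C.s (C.π i) * C.wordProd l := by
  unfold wordProd
  rw [List.map_cons, List.prod_cons]

theorem wordProd_append (l l' : List (Fin C.r)) :
    C.wordProd (l ++ l') = C.wordProd l * C.wordProd l' := by
  unfold wordProd
  rw [List.map_append, List.prod_append]

theorem wordProd_singleton (i : Fin C.r) :
    C.wordProd [i] = C.s (C.π i) := by
  rw [C.wordProd_cons, C.wordProd_nil, mul_one]

theorem wordProd_mem (l : List (Fin C.r)) : C.wordProd l ∈ C.W := by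
  induction l with
  | nil => rw [C.wordProd_nil]; exact one_mem _
  | cons i t ih =>
    rw [C.wordProd_cons]
    exact mul_mem (C.s_mem_W (C.simple_mem i)) ih

theorem wordProd_reverse (l : List (Fin C.r)) :
    C.wordProd l.reverse = (C.wordProd l)⁻¹ := by
  induction l with
  | nil => simp [wordProd_nil]
  | cons i t ih =>
    rw [List.reverse_cons, C.wordProd_append, ih, C.wordProd_cons, C.wordProd_nil, mul_one,
      C.wordProd_cons, mul_inv_rev, C.s_inv (C.simple_mem i)]

/-! ### Heights and reaching simple roots -/

/-- The height of a vector: the sum of its coordinates. -/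
def ht (x : V) : ℝ := ∑ i, C.coord x i

theorem simple_ne_simple {i j : Fin C.r} (h : i ≠ j) : C.π i ≠ C.π j := by
  intro he
  exact h (C.simple_indep.injective he)

theorem coord_simple (i j : Fin C.r) :
    C.coord (C.π i) j = if i = j then 1 else 0 := by
  classical
  have : C.π i = ∑ k, (fun k => if i = k then (1:ℝ) else 0) k • C.π k := by
    simp
  rw [this, C.coord_sum]

theorem eq_simple_of_smul {α : V} (hα : α ∈ C.Φ) {i : Fin C.r} {c : ℝ}
    (h : α = c • C.π i) (hpos : C.IsPos α) : α = C.π i := by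
  have hc : (1/c) • α ∈ C.Φ → _ := fun _ => trivial
  have hΦi := C.simple_mem i
  -- c • π i = α ∈ Φ, so by reduced applied to π i, c = 1 or -1
  have := C.reduced (C.π i) hΦi c (by rw [← h]; exact hα)
  rcases this with rfl | rfl
  · rw [h, one_smul]
  · exfalso
    have hneg : C.IsNeg α := by
      rw [h, show (-1 : ℝ) • C.π i = -(C.π i) by module, C.isNeg_neg_iff]
      exact ⟨fun k => if i = k then 1 else 0, fun k => by positivity, by simp⟩
    exact C.not_isPos_isNeg hα hpos hneg

theorem isPos_simple (i : Fin C.r) : C.IsPos (C.π i) :=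
  ⟨fun k => if i = k then 1 else 0, fun k => by positivity, by simp⟩

/-- A simple reflection permutes the positive roots other than its own simple root. -/
theorem s_simple_pos {β : V} (hβ : β ∈ C.Φ) (hpos : C.IsPos β) (i : Fin C.r)
    (hne : β ≠ C.π i) : C.IsPos (C.s (C.π i) β) := by
  have hΦi := C.simple_mem i
  have hmem : C.s (C.π i) β ∈ C.Φ := C.refl_stable _ hΦi _ hβ
  by_contra hcon
  have hneg := C.isNeg_of_not_isPos hmem hcon
  -- s_i β = β - p • π i, so coord j (s_i β) = coord j β for j ≠ i
  have hco : ∀ j, j ≠ i → C.coord (C.s (C.π i) β) j = C.coord β j := by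
    intro j hj
    rw [C.s_apply_root hΦi]
    have : C.coord (β - (2 * ⟪β, C.π i⟫_ℝ / ⟪C.π i, C.π i⟫_ℝ) • C.π i) j
        = C.coord β j - (2 * ⟪β, C.π i⟫_ℝ / ⟪C.π i, C.π i⟫_ℝ) * C.coord (C.π i) j := by
      simp [coord, mul_comm]
    rw [this, C.coord_simple]
    simp [Ne.symm hj]
  have hzero : ∀ j, j ≠ i → C.coord β j = 0 := by
    intro j hj
    have h1 := (C.isPos_iff.1 hpos) j
    have h2 := (C.isNeg_iff.1 hneg) j
    rw [hco j hj] at h2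
    linarith
  have hβi : β = C.coord β i • C.π i := by
    conv_lhs => rw [← C.sum_coord β]
    rw [Finset.sum_eq_single i]
    · intro j _ hj; rw [hzero j hj, zero_smul]
    · intro h; exact absurd (Finset.mem_univ i) h
  exact hne (C.eq_simple_of_smul hβ hβi hpos)

theorem eq_simple_of_pos_neg {β : V} (hβ : β ∈ C.Φ) (hpos : C.IsPos β) (i : Fin C.r)
    (hneg : C.IsNeg (C.s (C.π i) β)) : β = C.π i := by
  by_contra hne
  exact C.not_isPos_isNeg (C.refl_stable _ (C.simple_mem i) _ hβ)
    (C.s_simple_pos hβ hpos i hne) hneg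


theorem coord_s_simple (β : V) (i j : Fin C.r) :
    C.coord (C.s (C.π i) β) j =
      C.coord β j - (2 * ⟪β, C.π i⟫_ℝ / ⟪C.π i, C.π i⟫_ℝ) * (if i = j then 1 else 0) := by
  rw [C.s_apply_root (C.simple_mem i)]
  have : C.coord (β - (2 * ⟪β, C.π i⟫_ℝ / ⟪C.π i, C.π i⟫_ℝ) • C.π i) j
      = C.coord β j - (2 * ⟪β, C.π i⟫_ℝ / ⟪C.π i, C.π i⟫_ℝ) * C.coord (C.π i) j := by
    simp [coord, mul_comm]
  rw [this, C.coord_simple]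

theorem ht_s_simple (β : V) (i : Fin C.r) :
    C.ht (C.s (C.π i) β) = C.ht β - 2 * ⟪β, C.π i⟫_ℝ / ⟪C.π i, C.π i⟫_ℝ := by
  unfold ht
  rw [Finset.sum_congr rfl (fun j _ => C.coord_s_simple β i j), Finset.sum_sub_distrib]
  simp [mul_ite, mul_one, mul_zero]

theorem reach_step {α : V} (hα : α ∈ C.Φ) (hpos : C.IsPos α) (hns : ∀ i, α ≠ C.π i) :
    ∃ i : Fin C.r, C.s (C.π i) α ∈ C.Φ ∧ C.IsPos (C.s (C.π i) α) ∧
      C.ht (C.s (C.π i) α) < C.ht α ∧ C.s (C.π i) (C.s (C.π i) α) = α := by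
  have hself : 0 < ⟪α, α⟫_ℝ := C.root_inner_pos hα
  have hsum : ⟪α, α⟫_ℝ = ∑ i, C.coord α i * ⟪C.π i, α⟫_ℝ := by
    conv_lhs => rw [← C.sum_coord α]
    rw [sum_inner]
    simp only [real_inner_smul_left]
    rw [C.sum_coord α]
  have hex : ∃ i, 0 < C.coord α i * ⟪C.π i, α⟫_ℝ := by
    by_contra h
    push_neg at h
    have : ⟪α, α⟫_ℝ ≤ 0 := hsum ▸ Finset.sum_nonpos (fun i _ => h i)
    linarith
  obtain ⟨i, hi⟩ := hex
  have hci : 0 ≤ C.coord α i := C.isPos_iff.1 hpos i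
  have hinner : 0 < ⟪α, C.π i⟫_ℝ := by
    rw [real_inner_comm]
    nlinarith
  refine ⟨i, C.refl_stable _ (C.simple_mem i) _ hα,
    C.s_simple_pos hα hpos i (hns i), ?_, C.s_s (C.simple_mem i) α⟩
  rw [C.ht_s_simple]
  have hp : 0 < 2 * ⟪α, C.π i⟫_ℝ / ⟪C.π i, C.π i⟫_ℝ :=
    div_pos (by linarith) (C.root_inner_pos (C.simple_mem i))
  linarith

theorem reach_aux (n : ℕ) : ∀ α ∈ C.Φ, C.IsPos α →
    (C.Φ.filter (fun γ => C.ht γ < C.ht α)).card ≤ n →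
    ∃ (l : List (Fin C.r)) (i : Fin C.r), C.wordProd l (C.π i) = α := by
  induction n with
  | zero =>
    intro α hα hpos hcard
    by_cases hs : ∃ i, α = C.π i
    · obtain ⟨i, rfl⟩ := hs
      exact ⟨[], i, rfl⟩
    · push_neg at hs
      obtain ⟨i, hmem, _, hht, _⟩ := C.reach_step hα hpos hs
      exfalso
      have : C.s (C.π i) α ∈ C.Φ.filter (fun γ => C.ht γ < C.ht α) :=
        Finset.mem_filter.2 ⟨hmem, hht⟩
      have := Finset.card_pos.2 ⟨_, this⟩
      omega
  | succ n ih =>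
    intro α hα hpos hcard
    by_cases hs : ∃ i, α = C.π i
    · obtain ⟨i, rfl⟩ := hs
      exact ⟨[], i, rfl⟩
    · push_neg at hs
      obtain ⟨i, hmem, hpos', hht, hss⟩ := C.reach_step hα hpos hs
      set β := C.s (C.π i) α with hβ
      have hsub : C.Φ.filter (fun γ => C.ht γ < C.ht β) ⊂
          C.Φ.filter (fun γ => C.ht γ < C.ht α) := by
        constructor
        · intro γ hγ
          have := Finset.mem_filter.1 hγ
          exact Finset.mem_filter.2 ⟨this.1, lt_trans this.2 hht⟩
        · intro hcon
          have : β ∈ C.Φ.filter (fun γ => C.ht γ < C.ht β) :=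
            hcon (Finset.mem_filter.2 ⟨hmem, hht⟩)
          exact absurd (Finset.mem_filter.1 this).2 (lt_irrefl _)
      have hcard' : (C.Φ.filter (fun γ => C.ht γ < C.ht β)).card ≤ n := by
        have := Finset.card_lt_card hsub
        omega
      obtain ⟨l, j, hlj⟩ := ih β hmem hpos' hcard'
      refine ⟨i :: l, j, ?_⟩
      rw [C.wordProd_cons]
      show C.s (C.π i) (C.wordProd l (C.π j)) = α
      rw [hlj, hss]

theorem s_neg {α : V} (hα : α ∈ C.Φ) : C.s (-α) = C.s α := by
  refine LinearEquiv.ext fun x => ?_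
  rw [C.s_apply_root hα, C.s_apply_root (C.neg_mem_Φ hα)]
  have h1 : ⟪x, -α⟫_ℝ = -⟪x, α⟫_ℝ := by simp
  have h2 : ⟪(-α : V), -α⟫_ℝ = ⟪α, α⟫_ℝ := by simp
  rw [h1, h2, smul_neg, show 2 * -⟪x, α⟫_ℝ / ⟪α, α⟫_ℝ = -(2 * ⟪x, α⟫_ℝ / ⟪α, α⟫_ℝ) by ring,
    neg_smul, neg_neg]

theorem exists_word_of_mem_W {g : V ≃ₗ[ℝ] V} (hg : g ∈ C.W) :
    ∃ l : List (Fin C.r), C.wordProd l = g := by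
  rw [C.W_eq] at hg
  induction hg using Subgroup.closure_induction with
  | mem x hx =>
    obtain ⟨α, hα, rfl⟩ := hx
    have key : ∀ α, α ∈ C.Φ → C.IsPos α → ∃ l, C.wordProd l = C.s α := by
      intro α hα hpos
      obtain ⟨l, i, hli⟩ := C.reach_aux (C.Φ.filter (fun γ => C.ht γ < C.ht α)).card
        α hα hpos le_rfl
      refine ⟨l ++ [i] ++ l.reverse, ?_⟩
      rw [C.wordProd_append, C.wordProd_append, C.wordProd_singleton, C.wordProd_reverse]
      have hconj := C.conj_s (C.wordProd_mem l) (C.simple_mem i)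
      rw [hli] at hconj
      rw [← hconj]
    rcases C.isPos_or_isNeg hα with h | h
    · exact key α hα h
    · obtain ⟨l, hl⟩ := key (-α) (C.neg_mem_Φ hα) h
      exact ⟨l, by rw [hl, C.s_neg hα]⟩
  | one => exact ⟨[], rfl⟩
  | mul x y hx hy ihx ihy =>
    obtain ⟨l, rfl⟩ := ihx
    obtain ⟨m, rfl⟩ := ihy
    exact ⟨l ++ m, C.wordProd_append l m⟩
  | inv x hx ihx =>
    obtain ⟨l, rfl⟩ := ihx
    exact ⟨l.reverse, C.wordProd_reverse l⟩

theorem length_le_of_word {g : V ≃ₗ[ℝ] V} (l : List (Fin C.r)) (h : C.wordProd l = g) :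
    C.length g ≤ l.length :=
  Nat.sInf_le ⟨l, rfl, h⟩

theorem exists_min_word {g : V ≃ₗ[ℝ] V} (hg : g ∈ C.W) :
    ∃ l : List (Fin C.r), l.length = C.length g ∧ C.wordProd l = g := by
  have hne : {n | ∃ l : List (Fin C.r), l.length = n ∧ C.wordProd l = g}.Nonempty := by
    obtain ⟨l, hl⟩ := C.exists_word_of_mem_W hg
    exact ⟨l.length, l, rfl, hl⟩
  exact Nat.sInf_mem hne


/-! ### Inversions -/

/-- The set of positive roots sent to negative roots by `w`. -/
def negSet (w : V ≃ₗ[ℝ] V) : Finset V :=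
  C.Φ.filter (fun a => C.IsPos a ∧ C.IsNeg (w a))

/-- The number of inversions of `w`. -/
def negCount (w : V ≃ₗ[ℝ] V) : ℕ := (C.negSet w).card

theorem mem_negSet_iff {w : V ≃ₗ[ℝ] V} {γ : V} :
    γ ∈ C.negSet w ↔ γ ∈ C.Φ ∧ C.IsPos γ ∧ C.IsNeg (w γ) := by
  unfold negSet; simp

theorem mul_s_apply (w : V ≃ₗ[ℝ] V) (α x : V) (hα : α ∈ C.Φ) :
    (w * C.s α) x = w (C.s α x) := rfl

theorem negSet_mul_s {w : V ≃ₗ[ℝ] V} (hw : w ∈ C.W) (i : Fin C.r)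
    (hpos : C.IsPos (w (C.π i))) :
    C.negSet (w * C.s (C.π i)) = insert (C.π i) ((C.negSet w).image (C.s (C.π i))) := by
  have hΦi := C.simple_mem i
  ext γ
  rw [C.mem_negSet_iff, Finset.mem_insert, Finset.mem_image]
  constructor
  · rintro ⟨hγΦ, hγpos, hγneg⟩
    by_cases h : γ = C.π i
    · exact Or.inl h
    · refine Or.inr ⟨C.s (C.π i) γ, C.mem_negSet_iff.2
        ⟨C.refl_stable _ hΦi _ hγΦ, C.s_simple_pos hγΦ hγpos i h, ?_⟩, C.s_s hΦi γ⟩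
      exact hγneg
  · rintro (rfl | ⟨δ, hδ, rfl⟩)
    · refine ⟨hΦi, C.isPos_simple i, ?_⟩
      show C.IsNeg (w (C.s (C.π i) (C.π i)))
      rw [C.s_apply_self hΦi, map_neg, C.isNeg_neg_iff]
      exact hpos
    · obtain ⟨hδΦ, hδpos, hδneg⟩ := C.mem_negSet_iff.1 hδ
      have hδne : δ ≠ C.π i := by
        rintro rfl
        exact C.not_isPos_isNeg (C.W_root_stable w hw _ hΦi) hpos hδneg
      refine ⟨C.refl_stable _ hΦi _ hδΦ, C.s_simple_pos hδΦ hδpos i hδne, ?_⟩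
      show C.IsNeg (w (C.s (C.π i) (C.s (C.π i) δ)))
      rw [C.s_s hΦi]
      exact hδneg

theorem negCount_mul_s_pos {w : V ≃ₗ[ℝ] V} (hw : w ∈ C.W) (i : Fin C.r)
    (hpos : C.IsPos (w (C.π i))) :
    C.negCount (w * C.s (C.π i)) = C.negCount w + 1 := by
  have hΦi := C.simple_mem i
  unfold negCount
  rw [C.negSet_mul_s hw i hpos]
  have hnotmem : C.π i ∉ (C.negSet w).image (C.s (C.π i)) := by
    intro h
    obtain ⟨δ, hδ, hδi⟩ := Finset.mem_image.1 h
    obtain ⟨hδΦ, hδpos, _⟩ := C.mem_negSet_iff.1 hδ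
    have hδ2 : δ = -C.π i := by
      have h5 := congrArg (C.s (C.π i)) hδi
      rw [C.s_s hΦi, C.s_apply_self hΦi] at h5
      exact h5
    rw [hδ2] at hδpos
    exact C.not_isPos_isNeg hΦi (C.isPos_simple i) hδpos
  rw [Finset.card_insert_of_notMem hnotmem,
    Finset.card_image_of_injective _ (C.s (C.π i)).injective]

theorem negCount_mul_s_neg {w : V ≃ₗ[ℝ] V} (hw : w ∈ C.W) (i : Fin C.r)
    (hneg : C.IsNeg (w (C.π i))) :
    C.negCount w = C.negCount (w * C.s (C.π i)) + 1 := by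
  have hΦi := C.simple_mem i
  have h1 : C.IsPos ((w * C.s (C.π i)) (C.π i)) := by
    show C.IsPos (w (C.s (C.π i) (C.π i)))
    rw [C.s_apply_self hΦi, map_neg, ← C.isNeg_neg_iff, neg_neg]
    exact hneg
  have := C.negCount_mul_s_pos (mul_mem hw (C.s_mem_W hΦi)) i h1
  rw [mul_assoc, C.s_sq hΦi, mul_one] at this
  omega


theorem negCount_le_word_length (l : List (Fin C.r)) :
    C.negCount (C.wordProd l) ≤ l.length := by
  induction l using List.reverseRecOn with
  | nil =>
    show C.negCount (C.wordProd []) ≤ 0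
    rw [C.wordProd_nil]
    have he : C.negSet 1 = ∅ := by
      rw [Finset.eq_empty_iff_forall_notMem]
      intro γ hγ
      obtain ⟨hΦ, hp, hn⟩ := C.mem_negSet_iff.1 hγ
      exact C.not_isPos_isNeg hΦ hp (by simpa using hn)
    simp [negCount, he]
  | append_singleton l i ih =>
    rw [C.wordProd_append, C.wordProd_singleton, List.length_append]
    have hw := C.wordProd_mem l
    rcases C.isPos_or_isNeg (C.W_root_stable _ hw _ (C.simple_mem i)) with h | h
    · rw [C.negCount_mul_s_pos hw i h]
      simpa using ih
    · have := C.negCount_mul_s_neg hw i h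
      simp only [List.length_singleton]
      omega

theorem negCount_le_length {g : V ≃ₗ[ℝ] V} (hg : g ∈ C.W) :
    C.negCount g ≤ C.length g := by
  obtain ⟨l, hlen, hl⟩ := C.exists_min_word hg
  rw [← hl, show C.length (C.wordProd l) = l.length from by rw [hl, ← hlen]]
  exact C.negCount_le_word_length l

/-- Deletion: if `w(π j) < 0` then any word for `w` can be shortened after
multiplying by `s_j`. -/
theorem deletion (l : List (Fin C.r)) (j : Fin C.r)
    (h : C.IsNeg (C.wordProd l (C.π j))) :
    ∃ l' : List (Fin C.r), l'.length + 1 = l.length ∧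
      C.wordProd l' = C.wordProd l * C.s (C.π j) := by
  induction l with
  | nil =>
    exfalso
    rw [C.wordProd_nil] at h
    exact C.not_isPos_isNeg (C.simple_mem j) (C.isPos_simple j) (by simpa using h)
  | cons i t ih =>
    rw [C.wordProd_cons] at h ⊢
    have hstep : (C.s (C.π i) * C.wordProd t) (C.π j) = C.s (C.π i) (C.wordProd t (C.π j)) := rfl
    rw [hstep] at h
    have htΦ : C.wordProd t (C.π j) ∈ C.Φ :=
      C.W_root_stable _ (C.wordProd_mem t) _ (C.simple_mem j)
    rcases C.isPos_or_isNeg htΦ with hp | hn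
    · -- then wordProd t (π j) = π i
      have heq : C.wordProd t (C.π j) = C.π i := C.eq_simple_of_pos_neg htΦ hp i h
      refine ⟨t, by simp, ?_⟩
      have hconj := C.conj_s (C.wordProd_mem t) (C.simple_mem j)
      rw [heq] at hconj
      -- hconj : wordProd t * s_j * (wordProd t)⁻¹ = s (π i)
      rw [← hconj]
      group
      rw [mul_assoc, C.s_sq (C.simple_mem j), mul_one]
    · obtain ⟨t', hlen, ht'⟩ := ih hn
      refine ⟨i :: t', by simpa using hlen, ?_⟩
      rw [C.wordProd_cons, ht', mul_assoc]

theorem length_mul_s_lt_of_neg {g : V ≃ₗ[ℝ] V} (hg : g ∈ C.W) (j : Fin C.r)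
    (h : C.IsNeg (g (C.π j))) :
    C.length (g * C.s (C.π j)) < C.length g := by
  obtain ⟨l, hlen, hl⟩ := C.exists_min_word hg
  obtain ⟨l', hlen', hl'⟩ := C.deletion l j (by rwa [hl])
  rw [hl] at hl'
  have := C.length_le_of_word l' hl'
  omega

theorem length_lt_mul_s_of_pos {g : V ≃ₗ[ℝ] V} (hg : g ∈ C.W) (j : Fin C.r)
    (h : C.IsPos (g (C.π j))) :
    C.length g < C.length (g * C.s (C.π j)) := by
  have hΦj := C.simple_mem j
  have hg' : g * C.s (C.π j) ∈ C.W := mul_mem hg (C.s_mem_W hΦj)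
  have h2 : C.IsNeg ((g * C.s (C.π j)) (C.π j)) := by
    show C.IsNeg (g (C.s (C.π j) (C.π j)))
    rw [C.s_apply_self hΦj, map_neg]
    rwa [C.isNeg_neg_iff]
  have := C.length_mul_s_lt_of_neg hg' j h2
  rwa [mul_assoc, C.s_sq hΦj, mul_one] at this

theorem length_le_negCount {g : V ≃ₗ[ℝ] V} (hg : g ∈ C.W) :
    C.length g ≤ C.negCount g := by
  generalize hn : C.length g = n
  induction n using Nat.strong_induction_on generalizing g with
  | _ n ih =>
    rcases Nat.eq_zero_or_pos n with rfl | hpos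
    · omega
    · obtain ⟨l, hlen, hl⟩ := C.exists_min_word hg
      have hlne : l ≠ [] := by
        intro hcon
        rw [hcon] at hlen
        simp at hlen
        omega
      obtain ⟨t, j, rfl⟩ := List.eq_nil_or_concat l |>.resolve_left hlne
      simp only [List.concat_eq_append] at hlen hl
      rw [C.wordProd_append, C.wordProd_singleton] at hl
      set g' := C.wordProd t with hg'def
      have hg'W : g' ∈ C.W := C.wordProd_mem t
      -- g = g' * s_j, so g * s_j = g'
      have hgs : g * C.s (C.π j) = g' := by
        rw [← hl, mul_assoc, C.s_sq (C.simple_mem j), mul_one]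
      have hlg' : C.length g' ≤ n - 1 := by
        have : C.length g' ≤ t.length := C.length_le_of_word t rfl
        rw [List.length_append, List.length_singleton] at hlen
        omega
      -- g (π j) is negative
      have hneg : C.IsNeg (g (C.π j)) := by
        by_contra hcon
        have hp := C.isPos_of_not_isNeg (C.W_root_stable g hg _ (C.simple_mem j)) hcon
        have := C.length_lt_mul_s_of_pos hg j hp
        rw [hgs] at this
        omega
      have hcount := C.negCount_mul_s_neg hg j hneg
      rw [hgs] at hcount
      have hlt : C.length g' < n := by omega
      -- length g' = length g - 1 exactly? we need length g ≤ negCount g' + 1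
      have hle : n ≤ C.length g' + 1 := by
        obtain ⟨m, hmlen, hm⟩ := C.exists_min_word hg'W
        have : C.wordProd (m ++ [j]) = g := by
          rw [C.wordProd_append, C.wordProd_singleton, hm, ← hgs, mul_assoc,
            C.s_sq (C.simple_mem j), mul_one]
        have := C.length_le_of_word _ this
        rw [List.length_append, List.length_singleton] at this
        omega
      have ihg' := ih (C.length g') hlt hg'W rfl
      omega

theorem eq_one_of_negCount_zero {g : V ≃ₗ[ℝ] V} (hg : g ∈ C.W)
    (h : C.negCount g = 0) : g = 1 := by
  have := C.length_le_negCount hg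
  rw [h] at this
  have hlen : C.length g = 0 := by omega
  obtain ⟨l, hlenl, hl⟩ := C.exists_min_word hg
  rw [hlen, List.length_eq_zero_iff] at hlenl
  rw [hlenl, C.wordProd_nil] at hl
  exact hl.symm

/-- A nonnegative combination of positive roots is positive. -/
theorem isPos_image {g : V ≃ₗ[ℝ] V} (hsimple : ∀ i, C.IsPos (g (C.π i)))
    {α : V} (hpos : C.IsPos α) : C.IsPos (g α) := by
  obtain ⟨c, hc, rfl⟩ := hpos
  rw [map_sum]
  simp only [map_smul]
  exact C.isPos_sum Finset.univ c (fun i => g (C.π i)) hc (fun k _ => hsimple k)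


theorem coord_linear_sum {ι : Type*} (t : Finset ι) (c : ι → ℝ) (f : ι → V) (j : Fin C.r) :
    C.coord (∑ k ∈ t, c k • f k) j = ∑ k ∈ t, c k * C.coord (f k) j := by
  simp [coord]

section W0

variable {w₀ : V ≃ₗ[ℝ] V} (hw₀ : w₀ ∈ C.W)
variable (hlong : ∀ u ∈ C.W, C.length u ≤ C.length w₀)

include hw₀ hlong

theorem w0_simple_neg (i : Fin C.r) : C.IsNeg (w₀ (C.π i)) := by
  by_contra h
  have hp := C.isPos_of_not_isNeg (C.W_root_stable _ hw₀ _ (C.simple_mem i)) h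
  have h1 := C.length_lt_mul_s_of_pos hw₀ i hp
  have h2 := hlong _ (mul_mem hw₀ (C.s_mem_W (C.simple_mem i)))
  omega

theorem w0_pos_neg {α : V} (h : C.IsPos α) : C.IsNeg (w₀ α) := by
  obtain ⟨c, hc, rfl⟩ := h
  show C.IsPos (-(w₀ (∑ i, c i • C.π i)))
  have heq : -(w₀ (∑ i, c i • C.π i)) = ∑ i, c i • (-(w₀ (C.π i))) := by
    rw [map_sum, ← Finset.sum_neg_distrib]
    exact Finset.sum_congr rfl fun i _ => by rw [map_smul, smul_neg]
  rw [heq]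
  exact C.isPos_sum Finset.univ c _ hc fun k _ => C.w0_simple_neg hw₀ hlong k

theorem w0_neg_pos {α : V} (h : C.IsNeg α) : C.IsPos (w₀ α) := by
  have := C.w0_pos_neg hw₀ hlong h
  rw [map_neg, C.isNeg_neg_iff] at this
  exact this

theorem w0_isNeg_iff {α : V} (hα : α ∈ C.Φ) : C.IsNeg (w₀ α) ↔ C.IsPos α := by
  constructor
  · intro h
    by_contra hcon
    have hneg := C.isNeg_of_not_isPos hα hcon
    exact C.not_isPos_isNeg (C.W_root_stable _ hw₀ _ hα)
      (C.w0_neg_pos hw₀ hlong hneg) h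
  · exact C.w0_pos_neg hw₀ hlong

theorem w0_isPos_iff {α : V} (hα : α ∈ C.Φ) : C.IsPos (w₀ α) ↔ C.IsNeg α := by
  constructor
  · intro h
    by_contra hcon
    have hpos := C.isPos_of_not_isNeg hα hcon
    exact C.not_isPos_isNeg (C.W_root_stable _ hw₀ _ hα) h
      (C.w0_pos_neg hw₀ hlong hpos)
  · exact C.w0_neg_pos hw₀ hlong

theorem w0_sq : w₀ * w₀ = 1 := by
  apply C.eq_one_of_negCount_zero (mul_mem hw₀ hw₀)
  unfold negCount
  rw [Finset.card_eq_zero, Finset.eq_empty_iff_forall_notMem]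
  intro γ hγ
  obtain ⟨hΦ, hp, hn⟩ := C.mem_negSet_iff.1 hγ
  have h1 : C.IsNeg (w₀ γ) := C.w0_pos_neg hw₀ hlong hp
  have h2 : C.IsPos (w₀ (w₀ γ)) := C.w0_neg_pos hw₀ hlong h1
  have h3 : (w₀ * w₀) γ = w₀ (w₀ γ) := rfl
  rw [h3] at hn
  exact C.not_isPos_isNeg
    (C.W_root_stable _ hw₀ _ (C.W_root_stable _ hw₀ _ hΦ)) h2 hn

theorem w0_w0_apply (x : V) : w₀ (w₀ x) = x := by
  have := congrArg (fun g : V ≃ₗ[ℝ] V => g x) (C.w0_sq hw₀ hlong)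
  simpa using this

theorem w0_simple_image (i : Fin C.r) :
    ∃ j : Fin C.r, w₀ (C.π i) = -C.π j ∧ w₀ (C.π j) = -C.π i := by
  classical
  set γ : V := -(w₀ (C.π i)) with hγdef
  have hγΦ : γ ∈ C.Φ := C.neg_mem_Φ (C.W_root_stable _ hw₀ _ (C.simple_mem i))
  have hγpos : C.IsPos γ := C.w0_simple_neg hw₀ hlong i
  set c : Fin C.r → ℝ := fun k => C.coord γ k with hcdef
  have hc : ∀ k, 0 ≤ c k := C.isPos_iff.1 hγpos
  set δ : Fin C.r → V := fun k => -(w₀ (C.π k)) with hδdef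
  have hδΦ : ∀ k, δ k ∈ C.Φ := fun k =>
    C.neg_mem_Φ (C.W_root_stable _ hw₀ _ (C.simple_mem k))
  have hδpos : ∀ k, C.IsPos (δ k) := fun k => C.w0_simple_neg hw₀ hlong k
  have hrep : C.π i = ∑ k, c k • δ k := by
    have h1 : C.π i = -(w₀ γ) := by
      rw [hγdef, map_neg, neg_neg, C.w0_w0_apply hw₀ hlong]
    rw [h1]
    conv_lhs => rw [show γ = ∑ k, c k • C.π k from (C.sum_coord γ).symm]
    rw [map_sum, ← Finset.sum_neg_distrib]
    exact Finset.sum_congr rfl fun k _ => by rw [map_smul, smul_neg]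
  have hcoord : ∀ j, C.coord (C.π i) j = ∑ k, c k * C.coord (δ k) j := by
    intro j
    conv_lhs => rw [hrep]
    exact C.coord_linear_sum Finset.univ c δ j
  -- there is some k with c k ≠ 0
  have hex : ∃ k, c k ≠ 0 := by
    by_contra h
    push_neg at h
    have : C.π i = 0 := by
      rw [hrep]
      exact Finset.sum_eq_zero fun k _ => by rw [h k, zero_smul]
    exact C.root_ne_zero _ (C.simple_mem i) this
  obtain ⟨k, hk⟩ := hex
  have hck : 0 < c k := lt_of_le_of_ne (hc k) (Ne.symm hk)
  -- coordinates of δ k vanish away from i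
  have hvanish : ∀ j, j ≠ i → C.coord (δ k) j = 0 := by
    intro j hj
    have h0 : C.coord (C.π i) j = 0 := by
      rw [C.coord_simple]
      simp [Ne.symm hj]
    rw [hcoord j] at h0
    have hterm := (Finset.sum_eq_zero_iff_of_nonneg
      (fun m _ => mul_nonneg (hc m) (C.isPos_iff.1 (hδpos m) j))).1 h0 k (Finset.mem_univ k)
    rcases mul_eq_zero.1 hterm with h | h
    · exact absurd h hk
    · exact h
  have hmult : δ k = C.coord (δ k) i • C.π i := by
    conv_lhs => rw [← C.sum_coord (δ k)]
    rw [Finset.sum_eq_single i]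
    · intro j _ hj; rw [hvanish j hj, zero_smul]
    · intro h; exact absurd (Finset.mem_univ i) h
  have hδk : δ k = C.π i := C.eq_simple_of_smul (hδΦ k) hmult (hδpos k)
  -- δ k = -(w₀ π k) = π i
  refine ⟨k, ?_, ?_⟩
  · -- w₀ π i = -π k
    have : w₀ (C.π k) = -C.π i := by
      have := congrArg Neg.neg hδk
      rw [hδdef] at this
      simpa using this
    have h2 := congrArg w₀ this
    rw [C.w0_w0_apply hw₀ hlong, map_neg] at h2
    rw [h2, neg_neg]
  · have := congrArg Neg.neg hδk
    rw [hδdef] at this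
    simpa using this

end W0


theorem part1 {v w₀ : V ≃ₗ[ℝ] V} (hv : v ∈ C.W) (hw₀ : w₀ ∈ C.W)
    (hlong : ∀ u ∈ C.W, C.length u ≤ C.length w₀) (i : Fin C.r) :
    C.IsNeg ((w₀ * v⁻¹ * w₀) (C.π i)) ↔
      ¬ C.s (C.π i) (w₀ (v (C.steinberg v))) = w₀ (v (C.steinberg v)) := by
  classical
  set S := Finset.univ.filter (fun k => C.IsNeg (v⁻¹ (C.π k))) with hS
  set σ := ∑ k ∈ S, C.ω k with hσ
  have hvs : v (C.steinberg v) = σ := by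
    unfold steinberg
    exact v.apply_symm_apply _
  obtain ⟨j, hj1, hj2⟩ := C.w0_simple_image hw₀ hlong i
  have hjΦ : v⁻¹ (C.π j) ∈ C.Φ := C.W_root_stable _ (inv_mem hv) _ (C.simple_mem j)
  have hinner : ⟪w₀ σ, C.π i⟫_ℝ = -⟪σ, C.π j⟫_ℝ := by
    conv_lhs => rw [show C.π i = -(w₀ (C.π j)) by rw [hj2, neg_neg]]
    rw [inner_neg_right, C.inner_invariant w₀ hw₀ σ (C.π j)]
  have hfund : ∀ k, ⟪C.ω k, C.π j⟫_ℝ = if k = j then ⟪C.π j, C.π j⟫_ℝ / 2 else 0 := by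
    intro k
    have hf := C.fund k j
    have hpp : ⟪C.π j, C.π j⟫_ℝ ≠ 0 := ne_of_gt (C.root_inner_pos (C.simple_mem j))
    split_ifs with h
    · rw [if_pos h] at hf
      field_simp at hf
      linarith
    · rw [if_neg h] at hf
      field_simp at hf
      linarith
  have hσj : ⟪σ, C.π j⟫_ℝ = if j ∈ S then ⟪C.π j, C.π j⟫_ℝ / 2 else 0 := by
    rw [hσ, sum_inner, Finset.sum_congr rfl (fun k _ => hfund k)]
    exact Finset.sum_ite_eq' S j _
  have hup : (w₀ * v⁻¹ * w₀) (C.π i) = -(w₀ (v⁻¹ (C.π j))) := by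
    show w₀ (v⁻¹ (w₀ (C.π i))) = _
    rw [hj1, map_neg, map_neg]
  rw [hvs, hup, C.isNeg_neg_iff, C.w0_isPos_iff hw₀ hlong hjΦ,
    not_congr (C.s_fix_iff (C.simple_mem i) (w₀ σ)), hinner]
  have hppj : 0 < ⟪C.π j, C.π j⟫_ℝ := C.root_inner_pos (C.simple_mem j)
  constructor
  · intro h
    have hjS : j ∈ S := by rw [hS]; simp [h]; exact h
    rw [hσj, if_pos hjS]
    intro hcon
    have h0 := neg_eq_zero.1 hcon
    linarith
  · intro h
    by_contra hcon
    have hjS : j ∉ S := by rw [hS]; simp [hcon]; exact hcon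
    rw [hσj, if_neg hjS] at h
    simp at h


theorem min_coset (u : V ≃ₗ[ℝ] V) (hu : u ∈ C.W) (μ : V)
    (hJpos : ∀ i : Fin C.r, C.s (C.π i) μ = μ → C.IsPos (u (C.π i)))
    {z : V ≃ₗ[ℝ] V} (hz : z ∈ C.fixSubgroup μ) (hne : u * z ≠ u) :
    C.length u < C.length (u * z) := by
  classical
  -- "supported on J": coordinates vanish at indices whose simple reflection moves μ
  set SuppJ : V → Prop := fun x => ∀ k, ¬ C.s (C.π k) μ = μ → C.coord x k = 0 with hSuppJ
  set Q : (V ≃ₗ[ℝ] V) → Prop := fun g =>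
    ∀ α, α ∈ C.Φ → C.IsPos α → ¬ SuppJ α → (C.IsPos (g α) ∧ ¬ SuppJ (g α)) with hQ
  -- z is in W and preserves the positive roots not supported on J
  have hzP : ∀ y : V ≃ₗ[ℝ] V, y ∈ C.fixSubgroup μ → y ∈ C.W ∧ Q y ∧ Q y⁻¹ := by
    intro y hy
    unfold fixSubgroup at hy
    induction hy using Subgroup.closure_induction with
    | mem x hx =>
      obtain ⟨i, hiμ, rfl⟩ := hx
      have hΦi := C.simple_mem i
      have hQs : Q (C.s (C.π i)) := by
        intro α hαΦ hαpos hαsupp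
        have hex : ∃ k, ¬ C.s (C.π k) μ = μ ∧ C.coord α k ≠ 0 := by
          by_contra h
          push_neg at h
          exact hαsupp (fun k hk => h k hk)
        obtain ⟨k, hkμ, hkc⟩ := hex
        have hki : i ≠ k := by rintro rfl; exact hkμ hiμ
        have hkpos : 0 < C.coord α k := lt_of_le_of_ne (C.isPos_iff.1 hαpos k) (Ne.symm hkc)
        have hcoord : C.coord (C.s (C.π i) α) k = C.coord α k := by
          rw [C.coord_s_simple, if_neg hki]
          ring
        have hmem : C.s (C.π i) α ∈ C.Φ := C.refl_stable _ hΦi _ hαΦ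
        have hpos' : C.IsPos (C.s (C.π i) α) := by
          by_contra hcon
          have := C.isNeg_iff.1 (C.isNeg_of_not_isPos hmem hcon) k
          rw [hcoord] at this
          linarith
        refine ⟨hpos', ?_⟩
        intro hcon
        have := hcon k hkμ
        rw [hcoord] at this
        exact hkc this
      rw [C.s_inv hΦi]
      exact ⟨C.s_mem_W hΦi, hQs, hQs⟩
    | one =>
      refine ⟨one_mem _, ?_, ?_⟩
      · intro α hαΦ hαpos hαsupp
        exact ⟨hαpos, hαsupp⟩
      · intro α hαΦ hαpos hαsupp
        rw [inv_one]
        exact ⟨hαpos, hαsupp⟩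
    | mul x y hx hy ihx ihy =>
      obtain ⟨hxW, hxQ, hxQi⟩ := ihx
      obtain ⟨hyW, hyQ, hyQi⟩ := ihy
      refine ⟨mul_mem hxW hyW, ?_, ?_⟩
      · intro α hαΦ hαpos hαsupp
        have h1 := hyQ α hαΦ hαpos hαsupp
        have h2 := hxQ (y α) (C.W_root_stable _ hyW _ hαΦ) h1.1 h1.2
        exact h2
      · intro α hαΦ hαpos hαsupp
        have h1 := hxQi α hαΦ hαpos hαsupp
        have h2 := hyQi (x⁻¹ α) (C.W_root_stable _ (inv_mem hxW) _ hαΦ) h1.1 h1.2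
        have : (x * y)⁻¹ α = y⁻¹ (x⁻¹ α) := rfl
        rw [this]
        exact h2
    | inv x hx ihx =>
      obtain ⟨hxW, hxQ, hxQi⟩ := ihx
      refine ⟨inv_mem hxW, hxQi, ?_⟩
      rw [inv_inv]
      exact hxQ
  obtain ⟨hzW, hzQ, hzQi⟩ := hzP z hz
  -- u maps positive roots supported on J to positive roots
  have hu_supp : ∀ β, C.IsPos β → SuppJ β → C.IsPos (u β) := by
    intro β hβpos hβsupp
    have hrep : u β = ∑ k, C.coord β k • u (C.π k) := by
      conv_lhs => rw [← C.sum_coord β, map_sum]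
      exact Finset.sum_congr rfl fun k _ => by rw [map_smul]
    rw [hrep]
    refine C.isPos_sum Finset.univ _ _ (C.isPos_iff.1 hβpos) ?_
    intro k hk
    by_cases h : C.s (C.π k) μ = μ
    · exact hJpos k h
    · exact absurd (hβsupp k h) hk
  -- the two families of inversions of u * z
  have hNz : ∀ α ∈ C.negSet z, α ∈ C.negSet (u * z) ∧ SuppJ α := by
    intro α hα
    obtain ⟨hαΦ, hαpos, hαneg⟩ := C.mem_negSet_iff.1 hα
    have hzαΦ : z α ∈ C.Φ := C.W_root_stable _ hzW _ hαΦ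
    have hαsupp : SuppJ α := by
      by_contra hcon
      exact C.not_isPos_isNeg hzαΦ (hzQ α hαΦ hαpos hcon).1 hαneg
    have hnegΦ : -(z α) ∈ C.Φ := C.neg_mem_Φ hzαΦ
    have hnegpos : C.IsPos (-(z α)) := by rwa [← C.isNeg_neg_iff, neg_neg]
    have hnegsupp : SuppJ (-(z α)) := by
      by_contra hcon
      have h1 := (hzQi _ hnegΦ hnegpos hcon).1
      have hzz : z⁻¹ (z α) = α := z.symm_apply_apply α
      rw [map_neg, hzz] at h1
      rw [← C.isNeg_neg_iff, neg_neg] at h1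
      exact C.not_isPos_isNeg hαΦ hαpos h1
    have := hu_supp _ hnegpos hnegsupp
    rw [map_neg] at this
    refine ⟨C.mem_negSet_iff.2 ⟨hαΦ, hαpos, ?_⟩, hαsupp⟩
    show C.IsNeg (u (z α))
    rwa [← neg_neg (u (z α)), C.isNeg_neg_iff]
  have hNu : ∀ α ∈ C.negSet u, z⁻¹ α ∈ C.negSet (u * z) ∧ ¬ SuppJ (z⁻¹ α) := by
    intro α hα
    obtain ⟨hαΦ, hαpos, hαneg⟩ := C.mem_negSet_iff.1 hα
    have hαsupp : ¬ SuppJ α := by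
      intro hcon
      exact C.not_isPos_isNeg (C.W_root_stable _ hu _ hαΦ) (hu_supp _ hαpos hcon) hαneg
    have h1 := hzQi α hαΦ hαpos hαsupp
    refine ⟨C.mem_negSet_iff.2 ⟨C.W_root_stable _ (inv_mem hzW) _ hαΦ, h1.1, ?_⟩, h1.2⟩
    show C.IsNeg (u (z (z⁻¹ α)))
    have hzz : z (z⁻¹ α) = α := z.apply_symm_apply α
    rwa [hzz]
  -- count
  have hcount : C.negCount z + C.negCount u ≤ C.negCount (u * z) := by
    have hsub : C.negSet z ∪ (C.negSet u).image (fun α => z⁻¹ α) ⊆ C.negSet (u * z) := by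
      intro x hx
      rcases Finset.mem_union.1 hx with h | h
      · exact (hNz x h).1
      · obtain ⟨α, hα, rfl⟩ := Finset.mem_image.1 h
        exact (hNu α hα).1
    have hdisj : Disjoint (C.negSet z) ((C.negSet u).image (fun α => z⁻¹ α)) := by
      rw [Finset.disjoint_left]
      intro x hx hx'
      obtain ⟨α, hα, rfl⟩ := Finset.mem_image.1 hx'
      exact (hNu α hα).2 (hNz _ hx).2
    calc C.negCount z + C.negCount u
        = (C.negSet z ∪ (C.negSet u).image (fun α => z⁻¹ α)).card := by
          rw [Finset.card_union_of_disjoint hdisj,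
            Finset.card_image_of_injective _ (z⁻¹ : V ≃ₗ[ℝ] V).injective]
          rfl
      _ ≤ (C.negSet (u * z)).card := Finset.card_le_card hsub
      _ = C.negCount (u * z) := rfl
  have hz1 : z ≠ 1 := by
    intro hcon
    rw [hcon, mul_one] at hne
    exact hne rfl
  have hzc : 1 ≤ C.negCount z := by
    by_contra h
    push_neg at h
    exact hz1 (C.eq_one_of_negCount_zero hzW (by omega))
  have h1 : C.length u ≤ C.negCount u := C.length_le_negCount hu
  have h2 : C.negCount (u * z) ≤ C.length (u * z) :=
    C.negCount_le_length (mul_mem hu hzW)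
  omega

end RootSystemData

/-- Let `v ∈ W` and let `J` consist of the simple reflections fixing
`w₀ ⬝ (v ⬝ e_v)`.  Then for every simple root `β`, the root `(w₀ v⁻¹ w₀)(β)` is negative iff
`s_β ∉ J`; consequently `w₀ v⁻¹ w₀` is the unique minimal-length element of its coset
`(w₀ v⁻¹ w₀) W_J`. -/
theorem statement_11
    {V : Type} [NormedAddCommGroup V] [InnerProductSpace ℝ V] [FiniteDimensional ℝ V]
    (C : RootSystemData V)
    (v w₀ : V ≃ₗ[ℝ] V) (hv : v ∈ C.W) (hw₀ : w₀ ∈ C.W)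
    (hlong : ∀ u ∈ C.W, C.length u ≤ C.length w₀) :
    (∀ i : Fin C.r,
        C.IsNeg ((w₀ * v⁻¹ * w₀) (C.π i)) ↔
          ¬ C.s (C.π i) (w₀ (v (C.steinberg v))) = w₀ (v (C.steinberg v))) ∧
    (∀ z ∈ C.fixSubgroup (w₀ (v (C.steinberg v))),
        w₀ * v⁻¹ * w₀ * z ≠ w₀ * v⁻¹ * w₀ →
          C.length (w₀ * v⁻¹ * w₀) < C.length (w₀ * v⁻¹ * w₀ * z)) := by
  constructor
  · exact fun i => C.part1 hv hw₀ hlong i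
  · intro z hz hne
    have huW : w₀ * v⁻¹ * w₀ ∈ C.W := mul_mem (mul_mem hw₀ (inv_mem hv)) hw₀
    refine C.min_coset (w₀ * v⁻¹ * w₀) huW (w₀ (v (C.steinberg v))) ?_ hz hne
    intro i hfix
    have hnn : ¬ C.IsNeg ((w₀ * v⁻¹ * w₀) (C.π i)) := fun hn =>
      (C.part1 hv hw₀ hlong i).1 hn hfix
    exact C.isPos_of_not_isNeg (C.W_root_stable _ huW _ (C.simple_mem i)) hnn
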